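/- arXiv:1608.03979 — 2 statements merged into one kernel-verified Lean document; each statement's English description precedes it below -/
import Mathlib

section
/- For each α ∈ ℝ, the map φ_α : G → G is injective with open range φ_α(G), is of class C^∞ with Fréchet derivative at a ∈ G given by u ↦ exp_G(((1−α)/2)·a)·u, and its inverse φ_α⁻¹ : φ_α(G) → G is of class C^∞. Moreover, for all α, β ∈ ℝ and all a ∈ G, the Fréchet derivative of the transition map φ_α∘φ_β⁻¹ : φ_β(G) → G at the point φ_β(a) is the continuous linear map u ↦ exp_G(((β−α)/2)·a)·u. -/
open MeasureTheory BoundedContinuousFunction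

noncomputable section

namespace Paper

variable {Y : Type*} [TopologicalSpace Y]

/-- Pointwise exponential map on `G = C_b(B;ℝ)`: `expG a x = exp (a x)`. -/
def expG (a : BoundedContinuousFunction Y ℝ) : BoundedContinuousFunction Y ℝ :=
  BoundedContinuousFunction.ofNormedAddCommGroup (fun x => Real.exp (a x))
    (Real.continuous_exp.comp a.continuous) (Real.exp ‖a‖)
    (fun x => by
      rw [Real.norm_eq_abs, abs_of_pos (Real.exp_pos _)]
      exact Real.exp_le_exp.2 ((le_abs_self _).trans (a.norm_coe_le_norm x)))

@[simp] lemma expG_apply (a : BoundedContinuousFunction Y ℝ) (x : Y) :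
    expG a x = Real.exp (a x) := rfl

/-- The set `G⁺` of functions with strictly positive infimum. -/
def Gplus : Set (BoundedContinuousFunction Y ℝ) :=
  {a | ∃ ε > 0, ∀ x, ε ≤ a x}

/-- Amari's α-embedding chart `φ_α`. -/
def phi (α : ℝ) (a : BoundedContinuousFunction Y ℝ) : BoundedContinuousFunction Y ℝ :=
  if α = 1 then a else (2 / (1 - α)) • (expG (((1 - α) / 2) • a) - 1)

section Helpers


def evalRingHom (x : Y) : BoundedContinuousFunction Y ℝ →+* ℝ where
  toFun f := f x
  map_one' := rfl
  map_mul' _ _ := rfl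
  map_zero' := rfl
  map_add' _ _ := rfl

lemma expG_eq (a : BoundedContinuousFunction Y ℝ) : expG a = NormedSpace.exp a := by
  ext x
  have h := NormedSpace.map_exp (evalRingHom (Y := Y) x)
      (continuous_eval_const x) a
  simp only [expG_apply, Real.exp_eq_exp_ℝ]
  exact h.symm

@[simp] lemma expG_zero : expG (0 : BoundedContinuousFunction Y ℝ) = 1 := by
  ext x; simp

lemma expG_add (a b : BoundedContinuousFunction Y ℝ) :
    expG (a + b) = expG a * expG b := by
  ext x; simp [Real.exp_add]

lemma expG_mul_neg (a : BoundedContinuousFunction Y ℝ) : expG a * expG (-a) = 1 := by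
  rw [← expG_add]; simp

lemma one_sub_ne {α : ℝ} (h : α ≠ 1) : (1 : ℝ) - α ≠ 0 := sub_ne_zero.2 (Ne.symm h)

lemma phi_eq_of_ne {α : ℝ} (h : α ≠ 1) :
    phi (Y := Y) α
      = fun b => (2 / (1 - α)) • (NormedSpace.exp (((1 - α) / 2) • b) - 1) := by
  funext b; rw [phi, if_neg h, expG_eq]

lemma phi_hasStrictFDerivAt (α : ℝ) (a : BoundedContinuousFunction Y ℝ) :
    HasStrictFDerivAt (phi α)
      (ContinuousLinearMap.mul ℝ (BoundedContinuousFunction Y ℝ)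
        (expG (((1 - α) / 2) • a))) a := by
  by_cases h : α = 1
  · subst h
    have hphi : phi (Y := Y) 1 = id := by funext b; simp [phi]
    have h1 : ContinuousLinearMap.mul ℝ (BoundedContinuousFunction Y ℝ)
        (expG (((1 - (1:ℝ)) / 2) • a)) = ContinuousLinearMap.id ℝ _ := by
      ext u
      simp [ContinuousLinearMap.mul_apply']
    rw [hphi, h1]
    exact hasStrictFDerivAt_id a
  · have hc0 : ((1 - α) / 2 : ℝ) ≠ 0 := div_ne_zero (one_sub_ne h) two_ne_zero
    have hlin : HasStrictFDerivAt
        (fun b : BoundedContinuousFunction Y ℝ => ((1 - α) / 2) • b)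
        (((1 - α) / 2 : ℝ) • ContinuousLinearMap.id ℝ (BoundedContinuousFunction Y ℝ)) a := by
      exact
        (((1 - α) / 2 : ℝ) • ContinuousLinearMap.id ℝ
          (BoundedContinuousFunction Y ℝ)).hasStrictFDerivAt
    have hexp := (hasStrictFDerivAt_exp (𝕂 := ℝ)
      (x := ((1 - α) / 2 : ℝ) • a)).comp a hlin
    have h2 := (hexp.sub_const (1 : BoundedContinuousFunction Y ℝ)).const_smul
      ((2 : ℝ) / (1 - α))
    have hD : ContinuousLinearMap.mul ℝ (BoundedContinuousFunction Y ℝ)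
          (expG (((1 - α) / 2) • a)) =
        ((2 : ℝ) / (1 - α)) •
          ((NormedSpace.exp (((1 - α) / 2 : ℝ) • a) •
              (1 : BoundedContinuousFunction Y ℝ →L[ℝ] BoundedContinuousFunction Y ℝ)).comp
            (((1 - α) / 2 : ℝ) • ContinuousLinearMap.id ℝ (BoundedContinuousFunction Y ℝ))) := by
      ext u x
      simp only [ContinuousLinearMap.mul_apply', ContinuousLinearMap.smul_apply,
        ContinuousLinearMap.comp_apply, ContinuousLinearMap.one_apply,
        ContinuousLinearMap.id_apply, BoundedContinuousFunction.coe_smul, Pi.smul_apply,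
        smul_eq_mul, BoundedContinuousFunction.mul_apply, expG_eq]
      field_simp [one_sub_ne h]
    rw [phi_eq_of_ne h, hD]
    exact h2

lemma phi_hasFDerivAt (α : ℝ) (a : BoundedContinuousFunction Y ℝ) :
    HasFDerivAt (phi α)
      (ContinuousLinearMap.mul ℝ (BoundedContinuousFunction Y ℝ)
        (expG (((1 - α) / 2) • a))) a :=
  (phi_hasStrictFDerivAt α a).hasFDerivAt

lemma phi_contDiff (α : ℝ) : ContDiff ℝ (⊤ : ℕ∞) (phi (Y := Y) α) := by
  by_cases h : α = 1
  · subst h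
    have hphi : phi (Y := Y) 1 = id := by funext b; simp [phi]
    rw [hphi]; exact contDiff_id
  · rw [phi_eq_of_ne h]
    have hexp : ContDiff ℝ (⊤ : ℕ∞)
        (NormedSpace.exp : BoundedContinuousFunction Y ℝ → BoundedContinuousFunction Y ℝ) :=
      contDiff_iff_contDiffAt.2 fun x => (NormedSpace.exp_analytic (𝕂 := ℝ) x).contDiffAt
    exact ((hexp.comp (contDiff_id.const_smul _)).sub contDiff_const).const_smul _

lemma expG_injective : Function.Injective (expG (Y := Y)) := by
  intro a b hab
  ext x
  have := congrArg (fun f : BoundedContinuousFunction Y ℝ => f x) hab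
  simpa [Real.exp_eq_exp] using this

lemma phi_injective (α : ℝ) : Function.Injective (phi (Y := Y) α) := by
  by_cases h : α = 1
  · subst h; intro a b hab; simpa [phi] using hab
  · intro a b hab
    rw [phi, phi, if_neg h, if_neg h] at hab
    have h2 : (2 : ℝ) / (1 - α) ≠ 0 := div_ne_zero two_ne_zero (one_sub_ne h)
    have h3 := smul_right_injective (BoundedContinuousFunction Y ℝ) h2 hab
    have h4 := expG_injective (sub_left_injective h3)
    exact smul_right_injective _ (div_ne_zero (one_sub_ne h) two_ne_zero) h4

lemma isOpen_Gplus : IsOpen (Gplus (Y := Y)) := by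
  rw [Metric.isOpen_iff]
  rintro a ⟨ε, hε, ha⟩
  refine ⟨ε / 2, by positivity, fun b hb => ⟨ε / 2, by positivity, fun x => ?_⟩⟩
  rw [Metric.mem_ball] at hb
  have h1 : dist (b x) (a x) ≤ dist b a := BoundedContinuousFunction.dist_coe_le_dist x
  have h2 := ha x
  have h3 : |b x - a x| < ε / 2 := by
    rw [← Real.dist_eq]; exact lt_of_le_of_lt h1 hb
  have := (abs_lt.1 h3).1
  linarith

lemma range_expG : Set.range (expG (Y := Y)) = Gplus := by
  ext g; constructor
  · rintro ⟨a, rfl⟩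
    refine ⟨Real.exp (-‖a‖), Real.exp_pos _, fun x => ?_⟩
    have : -‖a‖ ≤ a x := by
      have := a.norm_coe_le_norm x
      rw [Real.norm_eq_abs] at this
      linarith [(abs_le.1 this).1]
    simpa using Real.exp_le_exp.2 this
  · rintro ⟨ε, hε, hg⟩
    have hgpos : ∀ x, 0 < g x := fun x => lt_of_lt_of_le hε (hg x)
    refine ⟨BoundedContinuousFunction.ofNormedAddCommGroup (fun x => Real.log (g x))
      (g.continuous.log fun x => (hgpos x).ne') (max |Real.log ε| |Real.log ‖g‖|)
      (fun x => ?_), ?_⟩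
    · rw [Real.norm_eq_abs]
      refine abs_le_max_abs_abs (Real.log_le_log hε (hg x)) (Real.log_le_log (hgpos x) ?_)
      have := g.norm_coe_le_norm x
      rw [Real.norm_eq_abs] at this
      linarith [(abs_le.1 this).2]
    · ext x
      simp [Real.exp_log (hgpos x)]

lemma isOpen_range_phi (α : ℝ) : IsOpen (Set.range (phi (Y := Y) α)) := by
  by_cases h : α = 1
  · subst h
    have hphi : phi (Y := Y) 1 = id := by funext b; simp [phi]
    rw [hphi, Set.range_id]; exact isOpen_univ
  · have hc0 : ((1 - α) / 2 : ℝ) ≠ 0 := div_ne_zero (one_sub_ne h) two_ne_zero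
    have hrange : Set.range (phi (Y := Y) α) =
        (fun b : BoundedContinuousFunction Y ℝ => 1 + ((1 - α) / 2) • b) ⁻¹' Gplus := by
      ext b; constructor
      · rintro ⟨a, rfl⟩
        rw [Set.mem_preimage, ← range_expG]
        refine ⟨((1 - α) / 2) • a, ?_⟩
        rw [phi, if_neg h, smul_smul]
        have : ((1 - α) / 2 : ℝ) * (2 / (1 - α)) = 1 := by
          rw [div_mul_div_comm, mul_comm]
          exact div_self (mul_ne_zero two_ne_zero (one_sub_ne h))
        rw [this, one_smul]
        abel
      · intro hb
        rw [Set.mem_preimage, ← range_expG] at hb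
        obtain ⟨L, hL⟩ := hb
        refine ⟨((2 : ℝ) / (1 - α)) • L, ?_⟩
        rw [phi, if_neg h, smul_smul]
        have : ((1 - α) / 2 : ℝ) * (2 / (1 - α)) = 1 := by
          rw [div_mul_div_comm, mul_comm]
          exact div_self (mul_ne_zero two_ne_zero (one_sub_ne h))
        rw [this, one_smul, hL]
        rw [add_sub_cancel_left]  -- 1 + c•b - 1 = c•b
        rw [smul_smul]
        have h2 : ((2 : ℝ) / (1 - α)) * ((1 - α) / 2) = 1 := by
          rw [div_mul_div_comm, mul_comm]
          exact div_self (mul_ne_zero (one_sub_ne h) two_ne_zero)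
        rw [h2, one_smul]
    rw [hrange]
    exact (isOpen_Gplus).preimage (continuous_const.add (continuous_id.const_smul ((1 - α) / 2 : ℝ)))

def mulCLE (g h : BoundedContinuousFunction Y ℝ) (hgh : g * h = 1) :
    BoundedContinuousFunction Y ℝ ≃L[ℝ] BoundedContinuousFunction Y ℝ where
  toLinearEquiv :=
    { toFun := fun u => g * u
      map_add' := mul_add g
      map_smul' := fun r u => (mul_smul_comm r g u)
      invFun := fun u => h * u
      left_inv := fun u => by show h * (g * u) = u; rw [← mul_assoc, mul_comm h g, hgh, one_mul]
      right_inv := fun u => by show g * (h * u) = u; rw [← mul_assoc, hgh, one_mul] }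
  continuous_toFun := continuous_const.mul continuous_id
  continuous_invFun := continuous_const.mul continuous_id

lemma mulCLE_coe (g h : BoundedContinuousFunction Y ℝ) (hgh : g * h = 1) :
    (mulCLE g h hgh : BoundedContinuousFunction Y ℝ →L[ℝ] BoundedContinuousFunction Y ℝ)
      = ContinuousLinearMap.mul ℝ _ g := by
  ext u; rfl

lemma mulCLE_symm_coe (g h : BoundedContinuousFunction Y ℝ) (hgh : g * h = 1) :
    ((mulCLE g h hgh).symm :
        BoundedContinuousFunction Y ℝ →L[ℝ] BoundedContinuousFunction Y ℝ)
      = ContinuousLinearMap.mul ℝ _ h := by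
  ext u; rfl

lemma mul_comp_mul (g h : BoundedContinuousFunction Y ℝ) :
    (ContinuousLinearMap.mul ℝ (BoundedContinuousFunction Y ℝ) g).comp
        (ContinuousLinearMap.mul ℝ (BoundedContinuousFunction Y ℝ) h)
      = ContinuousLinearMap.mul ℝ (BoundedContinuousFunction Y ℝ) (g * h) := by
  ext u
  simp [ContinuousLinearMap.mul_apply', mul_assoc]

lemma psi_props (α : ℝ) :
    ∃ ψ : BoundedContinuousFunction Y ℝ → BoundedContinuousFunction Y ℝ,
      (∀ a, ψ (phi (Y := Y) α a) = a) ∧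
      (∀ a, HasFDerivAt ψ (ContinuousLinearMap.mul ℝ _
        (expG (-(((1 - α) / 2) • a)))) (phi α a)) ∧
      (∀ a, ContDiffAt ℝ (⊤ : ℕ∞) ψ (phi α a)) := by
  haveI : Nonempty (BoundedContinuousFunction Y ℝ) := ⟨0⟩
  refine ⟨Function.invFun (phi α), fun a => Function.leftInverse_invFun (phi_injective α) a,
    ?_, ?_⟩ <;> intro a <;>
  · set g := expG (((1 - α) / 2) • a) with hg
    set g' := expG (-(((1 - α) / 2) • a)) with hg'
    have hgh : g * g' = 1 := expG_mul_neg _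
    have hd : HasStrictFDerivAt (phi α)
        ((mulCLE g g' hgh : BoundedContinuousFunction Y ℝ →L[ℝ] _)) a := by
      rw [mulCLE_coe]; exact phi_hasStrictFDerivAt α a
    have hleft : ∀ᶠ x in nhds a, Function.invFun (phi (Y := Y) α) (phi α x) = x :=
      Filter.Eventually.of_forall fun x => Function.leftInverse_invFun (phi_injective α) x
    have hev := hd.localInverse_unique hleft
    first
    | · -- derivative
        have := hd.to_localInverse.hasFDerivAt
        rw [mulCLE_symm_coe] at this
        exact this.congr_of_eventuallyEq hev
    | · -- smoothness
        have hcd := (phi_contDiff (Y := Y) α).contDiffAt (x := a)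
        have hf' : HasFDerivAt (phi α)
            ((mulCLE g g' hgh : BoundedContinuousFunction Y ℝ →L[ℝ] _)) a := hd.hasFDerivAt
        have hloc := hcd.to_localInverse hf' (by simp)
        have hev2 := (hcd.hasStrictFDerivAt' hf' (by simp)).localInverse_unique hleft
        exact hloc.congr_of_eventuallyEq hev2

end Helpers

end Paper

/-- for each `α`, the chart `φ_α : G → G` is injective with open range,
is `C^∞` with Fréchet derivative `u ↦ exp_G(((1−α)/2)·a)·u` at `a`, its inverse is
`C^∞` on `φ_α(G)`, and the transition map `φ_α ∘ φ_β⁻¹` has Fréchet derivative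
`u ↦ exp_G(((β−α)/2)·a)·u` at `φ_β(a)`. -/
theorem statement_4 {X : Type*} [NormedAddCommGroup X] [NormedSpace ℝ X]
    (B : Set X) (hB : IsOpen B) (hBne : B.Nonempty) (α : ℝ) :
    Function.Injective (Paper.phi (Y := B) α) ∧
    IsOpen (Set.range (Paper.phi (Y := B) α)) ∧
    ContDiff ℝ (⊤ : ℕ∞) (Paper.phi (Y := B) α) ∧
    (∀ a : BoundedContinuousFunction B ℝ,
      HasFDerivAt (Paper.phi α)
        (ContinuousLinearMap.mul ℝ (BoundedContinuousFunction B ℝ)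
          (Paper.expG (((1 - α) / 2) • a))) a) ∧
    (∃ ψ : BoundedContinuousFunction B ℝ → BoundedContinuousFunction B ℝ,
      (∀ a, ψ (Paper.phi α a) = a) ∧
      ContDiffOn ℝ (⊤ : ℕ∞) ψ (Set.range (Paper.phi (Y := B) α))) ∧
    (∀ β : ℝ, ∃ ψβ : BoundedContinuousFunction B ℝ → BoundedContinuousFunction B ℝ,
      (∀ a, ψβ (Paper.phi β a) = a) ∧
      ∀ a : BoundedContinuousFunction B ℝ,
        HasFDerivAt (Paper.phi α ∘ ψβ)
          (ContinuousLinearMap.mul ℝ (BoundedContinuousFunction B ℝ)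
            (Paper.expG (((β - α) / 2) • a))) (Paper.phi β a)) := by
  refine ⟨Paper.phi_injective α, Paper.isOpen_range_phi α, Paper.phi_contDiff α,
    fun a => Paper.phi_hasFDerivAt α a, ?_, ?_⟩
  · obtain ⟨ψ, hψ, hd, hs⟩ := Paper.psi_props (Y := B) α
    refine ⟨ψ, hψ, ?_⟩
    rintro y ⟨a, rfl⟩
    exact (hs a).contDiffWithinAt
  · intro β
    obtain ⟨ψβ, hψ, hd, hs⟩ := Paper.psi_props (Y := B) β
    refine ⟨ψβ, hψ, fun a => ?_⟩
    have h1 : HasFDerivAt (Paper.phi α)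
        (ContinuousLinearMap.mul ℝ (BoundedContinuousFunction B ℝ)
          (Paper.expG (((1 - α) / 2) • a))) (ψβ (Paper.phi β a)) := by
      rw [hψ a]; exact Paper.phi_hasFDerivAt α a
    have h2 := h1.comp (Paper.phi β a) (hd a)
    have h3 : (ContinuousLinearMap.mul ℝ (BoundedContinuousFunction B ℝ)
          (Paper.expG (((1 - α) / 2) • a))).comp
        (ContinuousLinearMap.mul ℝ (BoundedContinuousFunction B ℝ)
          (Paper.expG (-(((1 - β) / 2) • a))))
        = ContinuousLinearMap.mul ℝ (BoundedContinuousFunction B ℝ)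
          (Paper.expG (((β - α) / 2) • a)) := by
      rw [Paper.mul_comp_mul, ← Paper.expG_add]
      congr 1
      ext x
      simp
      ring
    rwa [h3] at h2
end
end

section
/- The functional ψ : G → ℝ defined by ψ(a) := log ∫_B exp_G(a) dμ is well defined (the integral lies in (0, ∞)), is of class C^∞ (infinitely Fréchet differentiable), and its Fréchet derivative at a ∈ G is the continuous linear functional u ↦ (∫_B u·exp_G(a) dμ)/(∫_B exp_G(a) dμ), i.e. the expectation of u under the probability measure with density exp_G(a)/∫_B exp_G(a)dμ with respect to μ. -/
open MeasureTheory BoundedContinuousFunction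

noncomputable section

namespace Paper

variable {Y : Type*} [TopologicalSpace Y]

variable [MeasurableSpace Y]

/-- The α-divergence `D^α(a‖b)` (for `α ≠ ±1`) between the finite measures with
`μ`-densities `exp_G(a)` and `exp_G(b)`. -/
def Dalpha (μ : Measure Y) (α : ℝ) (a b : BoundedContinuousFunction Y ℝ) : ℝ :=
  (2 / (1 + α)) * ∫ x, (phi (-1) a x - phi α a x) ∂μ
    + (2 / (1 - α)) * ∫ x, (phi (-1) b x - phi (-α) b x) ∂μ
    - ∫ x, phi α a x * phi (-α) b x ∂μ

/-- The extended Kullback–Leibler divergence `D^{−1}(a‖b)`. -/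
def DKL (μ : Measure Y) (a b : BoundedContinuousFunction Y ℝ) : ℝ :=
  ∫ x, (expG b x - expG a x) ∂μ + ∫ x, expG a x * (a x - b x) ∂μ

end Paper



section Aux

open NormedSpace

variable {Y : Type*} [TopologicalSpace Y]

/-- Evaluation at a point as a ring homomorphism on `C_b(Y;ℝ)`. -/
def evalRingHom (x : Y) : BoundedContinuousFunction Y ℝ →+* ℝ where
  toFun f := f x
  map_one' := rfl
  map_mul' _ _ := rfl
  map_zero' := rfl
  map_add' _ _ := rfl

lemma expG_eq_exp (a : BoundedContinuousFunction Y ℝ) :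
    Paper.expG a = NormedSpace.exp a := by
  ext x
  have h := map_exp (evalRingHom x)
    ((BoundedContinuousFunction.evalCLM ℝ x).continuous) a
  simp only [evalRingHom, RingHom.coe_mk, MonoidHom.coe_mk, OneHom.coe_mk] at h
  rw [Paper.expG_apply, Real.exp_eq_exp_ℝ]; exact h.symm

end Aux

/-- the functional `ψ(a) = log ∫ exp_G(a) dμ` is well defined (the
integral is strictly positive), of class `C^∞`, and its Fréchet derivative at `a` is
`u ↦ (∫ u·exp_G(a) dμ)/(∫ exp_G(a) dμ)`. -/
theorem statement_18 {X : Type*} [NormedAddCommGroup X] [NormedSpace ℝ X]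
    [MeasurableSpace X] [OpensMeasurableSpace X]
    (B : Set X) (hB : IsOpen B) (hBne : B.Nonempty)
    (μ : Measure B) [IsProbabilityMeasure μ] :
    (∀ a : BoundedContinuousFunction B ℝ, 0 < ∫ x, Paper.expG a x ∂μ) ∧
    ContDiff ℝ (⊤ : ℕ∞)
      (fun a : BoundedContinuousFunction B ℝ => Real.log (∫ x, Paper.expG a x ∂μ)) ∧
    ∀ a : BoundedContinuousFunction B ℝ,
      ∃ D : BoundedContinuousFunction B ℝ →L[ℝ] ℝ,
        (∀ u : BoundedContinuousFunction B ℝ,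
          D u = (∫ x, u x * Paper.expG a x ∂μ) / ∫ x, Paper.expG a x ∂μ) ∧
        HasFDerivAt
          (fun c : BoundedContinuousFunction B ℝ => Real.log (∫ x, Paper.expG c x ∂μ))
          D a := by
  classical
  -- the integration functional as a continuous linear map
  set G := BoundedContinuousFunction B ℝ
  have hint : ∀ f : G, Integrable (fun x => f x) μ := fun f => f.integrable μ
  let L : G →L[ℝ] ℝ :=
    LinearMap.mkContinuous
      { toFun := fun f => ∫ x, f x ∂μ
        map_add' := fun f g => by
          show ∫ x, f x + g x ∂μ = ∫ x, f x ∂μ + ∫ x, g x ∂μ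
          exact integral_add (hint f) (hint g)
        map_smul' := fun c f => by
          show ∫ x, c * f x ∂μ = c * ∫ x, f x ∂μ
          exact integral_const_mul c _ }
      1 (fun f => by
        simpa using f.norm_integral_le_norm μ)
  have hL : ∀ f : G, L f = ∫ x, f x ∂μ := fun f => rfl
  -- positivity
  have hpos : ∀ a : G, 0 < ∫ x, Paper.expG a x ∂μ := by
    intro a
    have h1 : ∀ x, Real.exp (-‖a‖) ≤ Paper.expG a x := by
      intro x
      rw [Paper.expG_apply]
      exact Real.exp_le_exp.2 ((neg_le_neg (a.norm_coe_le_norm x)).trans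
        (neg_abs_le _))
    calc (0:ℝ) < Real.exp (-‖a‖) := Real.exp_pos _
      _ = ∫ _x, Real.exp (-‖a‖) ∂μ := by simp
      _ ≤ ∫ x, Paper.expG a x ∂μ :=
        integral_mono (integrable_const _) (hint (Paper.expG a)) h1
  -- the inner functional I a = ∫ exp a dμ
  have hIeq : ∀ a : G, L (NormedSpace.exp a) = ∫ x, Paper.expG a x ∂μ := by
    intro a
    rw [← expG_eq_exp, hL]
  have hexp_cd : ContDiff ℝ (⊤ : ℕ∞) (fun a : G => NormedSpace.exp a) := by
    rw [contDiff_iff_contDiffAt]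
    intro a
    exact (NormedSpace.exp_analytic a).contDiffAt.of_le le_top
  have hI_cd : ContDiff ℝ (⊤ : ℕ∞) (fun a : G => L (NormedSpace.exp a)) :=
    L.contDiff.comp hexp_cd
  have hIfun : (fun a : G => Real.log (∫ x, Paper.expG a x ∂μ))
      = fun a : G => Real.log (L (NormedSpace.exp a)) := by
    funext a; rw [hIeq]
  refine ⟨hpos, ?_, ?_⟩
  · rw [hIfun, contDiff_iff_contDiffAt]
    intro a
    have hne : L (NormedSpace.exp a) ≠ 0 := by
      rw [hIeq]; exact (hpos a).ne'
    exact (Real.contDiffAt_log.2 hne).comp a hI_cd.contDiffAt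
  · intro a
    have hne : L (NormedSpace.exp a) ≠ 0 := by
      rw [hIeq]; exact (hpos a).ne'
    have hIderiv : HasFDerivAt (fun c : G => L (NormedSpace.exp c))
        (L.comp (NormedSpace.exp a • (1 : G →L[ℝ] G))) a :=
      L.hasFDerivAt.comp a hasFDerivAt_exp
    have hlog : HasFDerivAt (fun c : G => Real.log (L (NormedSpace.exp c)))
        ((L (NormedSpace.exp a))⁻¹ • L.comp (NormedSpace.exp a • (1 : G →L[ℝ] G))) a :=
      by have := (Real.hasDerivAt_log hne).comp_hasFDerivAt a hIderiv; exact this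
    refine ⟨_, ?_, hIfun ▸ hlog⟩
    intro u
    have : ((L (NormedSpace.exp a))⁻¹ •
        L.comp (NormedSpace.exp a • (1 : G →L[ℝ] G))) u
        = (L (NormedSpace.exp a))⁻¹ * L (NormedSpace.exp a * u) := by
      simp [ContinuousLinearMap.smul_apply, smul_eq_mul]
    rw [this, hIeq, hL]
    rw [div_eq_inv_mul]
    congr 1
    apply integral_congr_ae
    filter_upwards with x
    rw [← expG_eq_exp]
    exact mul_comm ((Paper.expG a) x) (u x)
end
end
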